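/- Let H ∈ M_M(ℂ) and K ∈ M_N(ℂ) be complex Hadamard matrices and let L = H ⊗ K. Then for all r ≥ 1 and p ≥ 1, the normalized trace moments of the truncation matrices are multiplicative: (1/(MN)^r)·Tr((X^L)^p) = (1/M^r)·Tr((X^H)^p) · (1/N^r)·Tr((X^K)^p), where X^H, X^K, X^L are the order-r truncation matrices of H, K, L respectively. -/

import Mathlib

open Matrix BigOperators ComplexConjugate

/-- `H` is a complex Hadamard matrix. -/
def IsHadamard {I : Type*} [Fintype I] [DecidableEq I] (H : Matrix I I ℂ) : Prop :=
  (∀ i j, ‖H i j‖ = 1) ∧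
  (∀ i j, ∑ k, H i k * conj (H j k) = if i = j then (Fintype.card I : ℂ) else 0)

/-- The profile matrix of `H`: `Q_{ab,cd} = (1/N)·∑_i H_{ia}·H_{id}·conj(H_{ib}·H_{ic})`. -/
noncomputable def profile {I : Type*} [Fintype I] (H : Matrix I I ℂ) (a b c d : I) : ℂ :=
  (Fintype.card I : ℂ)⁻¹ * ∑ i, H i a * H i d * conj (H i b * H i c)

/-- The truncation matrix of order `r`:
`X_{a₁…a_r,b₁…b_r} = Q_{a₁b₁,a₂b₂}⋯Q_{a_rb_r,a₁b₁}` (cyclic indices, via `finRotate`). -/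
noncomputable def trunc {I : Type*} [Fintype I] (H : Matrix I I ℂ) (r : ℕ) :
    Matrix (Fin r → I) (Fin r → I) ℂ :=
  fun a b => ∏ s : Fin r,
    profile H (a s) (b s) (a (finRotate r s)) (b (finRotate r s))

/-- The tensor (Kronecker) product `L = H ⊗ K`, `L_{(m,e),(i,a)} = H_{mi}·K_{ea}`. -/
def tensorMat {I J : Type*} (H : Matrix I I ℂ) (K : Matrix J J ℂ) :
    Matrix (I × J) (I × J) ℂ :=
  fun p q => H p.1 q.1 * K p.2 q.2

open Kronecker

lemma profile_tensor {I J : Type*} [Fintype I] [Fintype J]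
    (H : Matrix I I ℂ) (K : Matrix J J ℂ) (a b c d : I × J) :
    profile (tensorMat H K) a b c d =
      profile H a.1 b.1 c.1 d.1 * profile K a.2 b.2 c.2 d.2 := by
  simp only [profile, tensorMat, Fintype.card_prod, Nat.cast_mul, mul_inv]
  have key : (∑ i : I, H i a.1 * H i d.1 * conj (H i b.1 * H i c.1)) *
      (∑ j : J, K j a.2 * K j d.2 * conj (K j b.2 * K j c.2)) =
      ∑ i : I × J, (H i.1 a.1 * K i.2 a.2) * (H i.1 d.1 * K i.2 d.2) *
        conj ((H i.1 b.1 * K i.2 b.2) * (H i.1 c.1 * K i.2 c.2)) := by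
    rw [Finset.sum_mul_sum, Fintype.sum_prod_type]
    refine Finset.sum_congr rfl fun i _ => Finset.sum_congr rfl fun j _ => ?_
    simp only [_root_.map_mul]
    ring
  rw [← key]
  ring

lemma trunc_tensor_eq {I J : Type*} [Fintype I] [Fintype J]
    (H : Matrix I I ℂ) (K : Matrix J J ℂ) (r : ℕ) :
    trunc (tensorMat H K) r =
      ((trunc H r) ⊗ₖ (trunc K r)).submatrix
        (Equiv.arrowProdEquivProdArrow (Fin r) (fun _ => I) (fun _ => J))
        (Equiv.arrowProdEquivProdArrow (Fin r) (fun _ => I) (fun _ => J)) := by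
  ext a b
  simp only [trunc, submatrix_apply, kroneckerMap_apply, Equiv.arrowProdEquivProdArrow,
    Equiv.coe_fn_mk, ← Finset.prod_mul_distrib]
  exact Finset.prod_congr rfl fun s _ => profile_tensor H K _ _ _ _

lemma kronecker_pow {m n : Type*} [Fintype m] [Fintype n] [DecidableEq m] [DecidableEq n]
    (A : Matrix m m ℂ) (B : Matrix n n ℂ) (p : ℕ) :
    (A ⊗ₖ B) ^ p = (A ^ p) ⊗ₖ (B ^ p) := by
  induction p with
  | zero => simp [Matrix.one_kronecker_one]
  | succ k ih => rw [pow_succ, pow_succ, pow_succ, ih, Matrix.mul_kronecker_mul]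

lemma submatrix_pow_equiv {m n : Type*} [Fintype m] [Fintype n] [DecidableEq m] [DecidableEq n]
    (A : Matrix n n ℂ) (e : m ≃ n) (p : ℕ) :
    (A.submatrix e e) ^ p = (A ^ p).submatrix e e := by
  induction p with
  | zero => simp [Matrix.submatrix_one_equiv]
  | succ k ih => rw [pow_succ, pow_succ, ih, Matrix.submatrix_mul_equiv]

lemma trace_submatrix_equiv' {m n : Type*} [Fintype m] [Fintype n]
    (A : Matrix n n ℂ) (e : m ≃ n) :
    Matrix.trace (A.submatrix e e) = Matrix.trace A := by
  simp only [Matrix.trace, Matrix.diag, Matrix.submatrix_apply]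
  exact Fintype.sum_equiv e _ _ fun i => rfl

theorem trunc_tensor_moments (M N : ℕ) (hM : 1 ≤ M) (hN : 1 ≤ N)
    (r p : ℕ) (hr : 1 ≤ r) (hp : 1 ≤ p)
    (H : Matrix (Fin M) (Fin M) ℂ) (K : Matrix (Fin N) (Fin N) ℂ)
    (hH : _root_.IsHadamard H) (hK : _root_.IsHadamard K) :
    (((M * N : ℕ) : ℂ) ^ r)⁻¹ * Matrix.trace (trunc (tensorMat H K) r ^ p) =
      (((M : ℂ) ^ r)⁻¹ * Matrix.trace (trunc H r ^ p)) *
        (((N : ℂ) ^ r)⁻¹ * Matrix.trace (trunc K r ^ p)) := by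
  have key : Matrix.trace (trunc (tensorMat H K) r ^ p) =
      Matrix.trace (trunc H r ^ p) * Matrix.trace (trunc K r ^ p) := by
    rw [trunc_tensor_eq]
    set e := Equiv.arrowProdEquivProdArrow (Fin r) (fun _ => Fin M) (fun _ => Fin N)
    rw [submatrix_pow_equiv, trace_submatrix_equiv', kronecker_pow, Matrix.trace_kronecker]
  rw [key]
  push_cast
  rw [mul_pow, mul_inv]
  ring
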